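/- Let Σ(1,γ) and Σ(1,γ0) be p×p positive definite matrices with p ≥ 2. If for every pair (j,l) with 1 ≤ j < l ≤ p the 2×2 submatrices satisfy Σ_{jl}(1,γ) = α_{jl}·Σ_{jl}(1,γ0) for some scalars α_{jl} > 0, then all α_{jl} are equal to a common value α, and hence Σ(1,γ) = α·Σ(1,γ0). -/

import Mathlib

lemma posdef_diag_pos {p : ℕ} {T : Matrix (Fin p) (Fin p) ℝ} (hT : T.PosDef) (i : Fin p) :
    0 < T i i := by
  exact hT.diag_pos

theorem stmt6 (p : ℕ) (hp : 2 ≤ p) (S T : Matrix (Fin p) (Fin p) ℝ)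
    (hS : S.PosDef) (hT : T.PosDef)
    (h : ∀ j l : Fin p, j < l → ∃ α : ℝ, 0 < α ∧
      S j j = α * T j j ∧ S j l = α * T j l ∧ S l j = α * T l j ∧ S l l = α * T l l) :
    ∃ α : ℝ, 0 < α ∧
      (∀ j l : Fin p, j < l →
        S j j = α * T j j ∧ S j l = α * T j l ∧ S l j = α * T l j ∧ S l l = α * T l l) ∧
      S = α • T := by
  have hTd : ∀ i, 0 < T i i := posdef_diag_pos hT
  -- each α_{jl} equals f j and f l where f i = S i i / T i i
  set f : Fin p → ℝ := fun i => S i i / T i i with hf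
  have key : ∀ j l : Fin p, j < l → f j = f l ∧
      (S j j = f j * T j j ∧ S j l = f j * T j l ∧ S l j = f j * T l j ∧
        S l l = f j * T l l) := by
    intro j l hjl
    obtain ⟨α, hα, h1, h2, h3, h4⟩ := h j l hjl
    have hfj : f j = α := by
      simp only [hf, h1]; rw [mul_div_assoc, div_self (hTd j).ne', mul_one]
    have hfl : f l = α := by
      simp only [hf, h4]; rw [mul_div_assoc, div_self (hTd l).ne', mul_one]
    refine ⟨hfj.trans hfl.symm, ?_, ?_, ?_, ?_⟩ <;> rw [hfj] <;> assumption
  -- f is constant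
  have hconst : ∀ i : Fin p, f i = f ⟨0, by omega⟩ := by
    intro i
    rcases lt_trichotomy i ⟨0, by omega⟩ with hlt | heq | hgt
    · exact ((key i _ hlt).1)
    · rw [heq]
    · exact ((key _ i hgt).1).symm
  set α := f ⟨0, by omega⟩ with hα
  have hαpos : 0 < α := by
    have h0 : (⟨0, by omega⟩ : Fin p) < ⟨1, by omega⟩ := by simp [Fin.lt_def]
    obtain ⟨β, hβ, h1, _⟩ := h _ _ h0
    have : f ⟨0, by omega⟩ = β := by simp only [hf, h1]; rw [mul_div_assoc, div_self (hTd _).ne', mul_one]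
    rw [hα, this]; exact hβ
  have main : ∀ j l : Fin p, j < l →
      S j j = α * T j j ∧ S j l = α * T j l ∧ S l j = α * T l j ∧ S l l = α * T l l := by
    intro j l hjl
    have := (key j l hjl).2
    rw [hconst j] at this
    exact this
  refine ⟨α, hαpos, main, ?_⟩
  ext j l
  rcases lt_trichotomy j l with hlt | heq | hgt
  · exact (main j l hlt).2.1
  · subst heq
    obtain ⟨l', hl'⟩ : ∃ l' : Fin p, j ≠ l' := by
      rcases lt_trichotomy j ⟨0, by omega⟩ with h' | h' | h'
      · exact ⟨_, h'.ne⟩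
      · exact ⟨⟨1, by omega⟩, by rw [h']; simp [Fin.ext_iff]⟩
      · exact ⟨_, h'.ne'⟩
    rcases hl'.lt_or_gt with h' | h'
    · exact (main j l' h').1
    · exact (main l' j h').2.2.2
  · exact (main l j hgt).2.2.1
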